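/- Let v_1, ..., v_p be vectors in ℝⁿ with ‖v_j‖₂ ≤ b for all j, and let y = Σ_{j=1}^p β̃_j v_j where β̃ ∈ ℝ^p satisfies ‖β̃‖₁ ≤ 1. Then for every positive integer K there exist integers k_1, ..., k_p ∈ ℤ with Σ_{j=1}^p |k_j| ≤ K such that ‖y − Σ_{j=1}^p (k_j/K) v_j‖₂² ≤ b²/K. -/

import Mathlib

open Finset
local notation "⟪" x ", " y "⟫" => (inner ℝ x y : ℝ)

private lemma maurey_aux {E : Type*} [NormedAddCommGroup E] [InnerProductSpace ℝ E]
    {p : ℕ} {b : ℝ} {V : Fin p → E} (hv : ∀ j, ‖V j‖ ≤ b)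
    {w : Fin p → ℝ} (hw0 : ∀ j, 0 ≤ w j) (hw1 : ∑ j, w j ≤ 1)
    {y : E} (hy : y = ∑ j, w j • V j) (m : ℕ) :
    ∃ k : Fin p → ℤ, (∑ j, |k j| ≤ (m : ℤ)) ∧
      ‖(∑ j, (k j : ℝ) • V j) - (m : ℝ) • y‖ ^ 2 ≤ m * b ^ 2 := by
  have hb2 : (0:ℝ) ≤ b ^ 2 := sq_nonneg b
  induction m with
  | zero => exact ⟨0, by simp, by simp⟩
  | succ m ih =>
    obtain ⟨k, hk1, hk2⟩ := ih
    set D := (∑ j, (k j : ℝ) • V j) - (m : ℝ) • y with hD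
    set P : Option (Fin p) → ℝ := fun o => o.elim (1 - ∑ j, w j) w with hPdef
    set W : Option (Fin p) → E := fun o => o.elim 0 V with hWdef
    have hP0 : ∀ o, 0 ≤ P o := by
      rintro (_ | j)
      · simpa [hPdef] using hw1
      · exact hw0 j
    have hP1 : ∑ o, P o = 1 := by
      rw [Fintype.sum_option]; simp [hPdef]
    have hWsum : ∑ o, P o • W o = y := by
      rw [Fintype.sum_option]; simp [hPdef, hWdef, hy]
    have hdiff : ∑ o, P o • (W o - y) = 0 := by
      simp_rw [smul_sub]
      rw [Finset.sum_sub_distrib, hWsum, ← Finset.sum_smul, hP1, one_smul, sub_self]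
    have key : ∃ o, 2 * ⟪D, W o - y⟫ + ‖W o - y‖ ^ 2 ≤ b ^ 2 := by
      by_contra hcon
      push_neg at hcon
      have e1 : ∑ o, P o * (2 * ⟪D, W o - y⟫) = 0 := by
        have h0 : ∑ o, P o * ⟪D, W o - y⟫ = ⟪D, (0 : E)⟫ := by
          rw [← hdiff, inner_sum]
          exact Finset.sum_congr rfl fun o _ => (real_inner_smul_right _ _ _).symm
        calc ∑ o, P o * (2 * ⟪D, W o - y⟫)
            = 2 * ∑ o, P o * ⟪D, W o - y⟫ := by
              rw [Finset.mul_sum]; exact Finset.sum_congr rfl fun o _ => by ring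
          _ = 0 := by rw [h0, inner_zero_right, mul_zero]
      have e2 : ∑ o, P o * ‖W o - y‖ ^ 2 ≤ b ^ 2 := by
        have expand : ∀ o : Option (Fin p), P o * ‖W o - y‖ ^ 2
            = P o * ‖W o‖ ^ 2 - 2 * (P o * ⟪W o, y⟫) + P o * ‖y‖ ^ 2 := by
          intro o
          rw [@norm_sub_sq_real]
          ring
        have hinner : ∑ o, P o * ⟪W o, y⟫ = ‖y‖ ^ 2 := by
          have : ∑ o, P o * ⟪W o, y⟫ = ⟪∑ o, P o • W o, y⟫ := by
            rw [sum_inner]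
            exact Finset.sum_congr rfl fun o _ => (real_inner_smul_left _ _ _).symm
          rw [this, hWsum, real_inner_self_eq_norm_sq]
        have hWnorm : ∑ o, P o * ‖W o‖ ^ 2 ≤ b ^ 2 := by
          rw [Fintype.sum_option]
          have h1 : ∀ j, w j * ‖V j‖ ^ 2 ≤ w j * b ^ 2 := by
            intro j
            have hb0 : (0:ℝ) ≤ b := le_trans (norm_nonneg _) (hv j)
            have : ‖V j‖ ^ 2 ≤ b ^ 2 := by nlinarith [norm_nonneg (V j), hv j]
            exact mul_le_mul_of_nonneg_left this (hw0 j)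
          have h2 : ∑ j, P (some j) * ‖W (some j)‖ ^ 2 ≤ ∑ j, w j * b ^ 2 := by
            apply Finset.sum_le_sum
            intro j _
            simpa [hPdef, hWdef] using h1 j
          have h3 : ∑ j, w j * b ^ 2 ≤ b ^ 2 := by
            rw [← Finset.sum_mul]
            nlinarith [hw1, hb2]
          have h4 : P none * ‖W none‖ ^ 2 = 0 := by simp [hWdef]
          rw [h4, zero_add]
          exact h2.trans h3
        calc ∑ o, P o * ‖W o - y‖ ^ 2
            = ∑ o, (P o * ‖W o‖ ^ 2 - 2 * (P o * ⟪W o, y⟫) + P o * ‖y‖ ^ 2) :=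
              Finset.sum_congr rfl fun o _ => expand o
          _ = (∑ o, P o * ‖W o‖ ^ 2) - 2 * (∑ o, P o * ⟪W o, y⟫)
              + (∑ o, P o) * ‖y‖ ^ 2 := by
              rw [Finset.sum_add_distrib, Finset.sum_sub_distrib, Finset.mul_sum,
                Finset.sum_mul]
          _ = (∑ o, P o * ‖W o‖ ^ 2) - ‖y‖ ^ 2 := by rw [hinner, hP1]; ring
          _ ≤ b ^ 2 := by nlinarith [sq_nonneg ‖y‖, hWnorm]
      have havg : ∑ o, P o * (2 * ⟪D, W o - y⟫ + ‖W o - y‖ ^ 2) ≤ b ^ 2 := by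
        have : ∑ o, P o * (2 * ⟪D, W o - y⟫ + ‖W o - y‖ ^ 2)
            = (∑ o, P o * (2 * ⟪D, W o - y⟫)) + ∑ o, P o * ‖W o - y‖ ^ 2 := by
          rw [← Finset.sum_add_distrib]
          exact Finset.sum_congr rfl fun o _ => by ring
        rw [this, e1, zero_add]; exact e2
      have hex : ∃ o, 0 < P o := by
        by_contra hno
        push_neg at hno
        have : ∑ o, P o = 0 :=
          le_antisymm (Finset.sum_nonpos fun o _ => hno o)
            (Finset.sum_nonneg fun o _ => hP0 o)
        rw [hP1] at this; norm_num at this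
      obtain ⟨o0, ho0⟩ := hex
      have hlt : b ^ 2 < ∑ o, P o * (2 * ⟪D, W o - y⟫ + ‖W o - y‖ ^ 2) := by
        have h1 : ∑ o, P o * b ^ 2 < ∑ o, P o * (2 * ⟪D, W o - y⟫ + ‖W o - y‖ ^ 2) :=
          Finset.sum_lt_sum
            (fun o _ => mul_le_mul_of_nonneg_left (hcon o).le (hP0 o))
            ⟨o0, Finset.mem_univ _, mul_lt_mul_of_pos_left (hcon o0) ho0⟩
        have h2 : ∑ o, P o * b ^ 2 = b ^ 2 := by rw [← Finset.sum_mul, hP1, one_mul]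
        linarith
      linarith
    obtain ⟨o, ho⟩ := key
    have hstep : ‖D + (W o - y)‖ ^ 2 ≤ ((m : ℝ) + 1) * b ^ 2 := by
      rw [norm_add_sq_real]
      have : ‖D‖ ^ 2 ≤ m * b ^ 2 := hk2
      nlinarith
    rcases o with _ | j
    · refine ⟨k, hk1.trans (by push_cast; omega), ?_⟩
      have hvec : (∑ j, (k j : ℝ) • V j) - ((m + 1 : ℕ) : ℝ) • y = D + (W none - y) := by
        simp only [hWdef, hD, Option.elim]
        push_cast
        module
      rw [hvec]
      push_cast
      simpa using hstep
    · refine ⟨fun j' => if j' = j then k j' + 1 else k j', ?_, ?_⟩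
      · have h1 : ∑ j', |if j' = j then k j' + 1 else k j'|
            ≤ ∑ j', (|k j'| + if j' = j then 1 else 0) := by
          apply Finset.sum_le_sum
          intro j' _
          split_ifs with h
          · calc |k j' + 1| ≤ |k j'| + |(1:ℤ)| := abs_add_le _ _
              _ = |k j'| + 1 := by norm_num
          · simp
        have h2 : ∑ j', (|k j'| + if j' = j then (1:ℤ) else 0)
            = (∑ j', |k j'|) + 1 := by
          rw [Finset.sum_add_distrib, Finset.sum_ite_eq' Finset.univ j]
          simp
        push_cast
        omega
      · have hterm : ∀ j', ((if j' = j then k j' + 1 else k j' : ℤ) : ℝ) • V j'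
            = (k j' : ℝ) • V j' + (if j' = j then V j' else 0) := by
          intro j'
          split_ifs with h
          · push_cast; rw [add_smul, one_smul]
          · rw [add_zero]
        have hvec : (∑ j', ((if j' = j then k j' + 1 else k j' : ℤ) : ℝ) • V j')
            - ((m + 1 : ℕ) : ℝ) • y = D + (W (some j) - y) := by
          rw [Finset.sum_congr rfl fun j' _ => hterm j', Finset.sum_add_distrib,
            Finset.sum_ite_eq' Finset.univ j V]
          simp only [hWdef, hD, Finset.mem_univ, if_true, Option.elim]
          push_cast
          module
        rw [hvec]
        push_cast
        simpa using hstep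

/-- Lemma 2 of the paper (Maurey's Lemma on the whole unit `ℓ₁` ball): if
`y = ∑ j β̃ j • v j` with `‖β̃‖₁ ≤ 1` and `‖v j‖₂ ≤ b` for all `j`, then for every positive
integer `K` there are integers `k 1, ..., k p` with `∑ j |k j| ≤ K` such that
`‖y - ∑ j (k j / K) • v j‖₂² ≤ b² / K`. -/
theorem maurey_l1_ball (n p : ℕ) (b : ℝ) (v : Fin p → Fin n → ℝ)
    (hv : ∀ j, Real.sqrt (∑ i, (v j i) ^ 2) ≤ b)
    (β : Fin p → ℝ) (hβ : ∑ j, |β j| ≤ 1)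
    (y : Fin n → ℝ) (hy : y = fun i => ∑ j, β j * v j i)
    (K : ℕ) (hK : 0 < K) :
    ∃ k : Fin p → ℤ, (∑ j, |k j| ≤ (K : ℤ)) ∧
      ∑ i, (y i - ∑ j, ((k j : ℝ) / K) * v j i) ^ 2 ≤ b ^ 2 / K := by
  classical
  set E := EuclideanSpace ℝ (Fin n) with hE
  set Vv : Fin p → E := fun j => (WithLp.toLp 2 (v j) : E) with hVv
  set s : Fin p → ℤ := fun j => if 0 < β j then 1 else if β j < 0 then -1 else 0 with hs
  set V : Fin p → E := fun j => ((s j : ℝ)) • Vv j with hV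
  set w : Fin p → ℝ := fun j => |β j| with hw
  have hVvnorm : ∀ j, ‖Vv j‖ ≤ b := by
    intro j
    rw [EuclideanSpace.norm_eq]
    simp only [Real.norm_eq_abs, sq_abs]
    simpa [hVv] using hv j
  have hVnorm : ∀ j, ‖V j‖ ≤ b := by
    intro j
    have hb0 : (0:ℝ) ≤ b := le_trans (norm_nonneg _) (hVvnorm j)
    have hsle : ‖((s j : ℤ) : ℝ)‖ ≤ 1 := by
      simp only [hs, Real.norm_eq_abs]
      split_ifs <;> norm_num
    calc ‖V j‖ = ‖((s j : ℤ) : ℝ)‖ * ‖Vv j‖ := by rw [hV]; exact norm_smul _ _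
      _ ≤ 1 * b := mul_le_mul hsle (hVvnorm j) (norm_nonneg _) zero_le_one
      _ = b := one_mul b
  have hw0 : ∀ j, 0 ≤ w j := fun j => abs_nonneg _
  have hsum_apply : ∀ (f : Fin p → E) (i : Fin n), (∑ j, f j) i = ∑ j, f j i := by
    intro f i
    rw [WithLp.ofLp_sum, Finset.sum_apply]
  have hy' : (WithLp.toLp 2 y : E) = ∑ j, w j • V j := by
    have hcoef : ∀ j, w j • V j = β j • Vv j := by
      intro j
      rw [hV, smul_smul]
      congr 1
      rcases lt_trichotomy (β j) 0 with h | h | h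
      · simp [hs, hw, h, abs_of_neg, not_lt.2 h.le]
      · simp [hs, hw, h]
      · simp [hs, hw, h, abs_of_pos]
    rw [Finset.sum_congr rfl fun j _ => hcoef j]
    ext i
    rw [hsum_apply]
    rw [hy]
    rfl
  obtain ⟨k, hk1, hk2⟩ := maurey_aux hVnorm hw0 hβ hy' K
  refine ⟨fun j => s j * k j, ?_, ?_⟩
  · calc ∑ j, |s j * k j| ≤ ∑ j, |k j| := by
          apply Finset.sum_le_sum
          intro j _
          rw [abs_mul]
          have : |s j| ≤ 1 := by simp only [hs]; split_ifs <;> norm_num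
          nlinarith [abs_nonneg (k j)]
      _ ≤ (K : ℤ) := hk1
  · set z : E := (∑ j, (k j : ℝ) • V j) - (K : ℝ) • (WithLp.toLp 2 y : E) with hz
    have hznorm : ‖z‖ ^ 2 = ∑ i, (z i) ^ 2 := by
      rw [EuclideanSpace.norm_eq, Real.sq_sqrt (Finset.sum_nonneg fun i _ => sq_nonneg _)]
      simp [sq_abs]
    have hzi : ∀ i, z i = (∑ j, ((s j : ℝ) * (k j : ℝ)) * v j i) - K * y i := by
      intro i
      have h1 : z i = (∑ j, (k j : ℝ) • V j) i - ((K : ℝ) • (WithLp.toLp 2 y : E)) i := rfl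
      rw [h1, hsum_apply]
      have h2 : ∀ j : Fin p, ((k j : ℝ) • V j) i = ((s j : ℝ) * (k j : ℝ)) * v j i := by
        intro j
        show (k j : ℝ) * ((s j : ℝ) * v j i) = _
        ring
      rw [Finset.sum_congr rfl fun j _ => h2 j]
      rfl
    have hKpos : (0:ℝ) < K := by exact_mod_cast hK
    have hterm : ∀ i, (y i - ∑ j, (((s j * k j : ℤ) : ℝ) / K) * v j i) ^ 2
        = (z i) ^ 2 / (K : ℝ) ^ 2 := by
      intro i
      rw [hzi i]
      have hA : ∑ j, (((s j * k j : ℤ) : ℝ) / K) * v j i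
          = (∑ j, ((s j : ℝ) * (k j : ℝ)) * v j i) / K := by
        rw [Finset.sum_div]
        apply Finset.sum_congr rfl
        intro j _
        push_cast
        ring
      rw [hA]
      field_simp
      ring
    calc ∑ i, (y i - ∑ j, (((s j * k j : ℤ) : ℝ) / K) * v j i) ^ 2
        = ∑ i, (z i) ^ 2 / (K : ℝ) ^ 2 := Finset.sum_congr rfl fun i _ => hterm i
      _ = ‖z‖ ^ 2 / (K : ℝ) ^ 2 := by rw [← Finset.sum_div, hznorm]
      _ ≤ (K * b ^ 2) / (K : ℝ) ^ 2 := by gcongr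
      _ = b ^ 2 / K := by field_simp
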